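/- Let A, B be n×n positive semidefinite complex matrices, X an arbitrary n×n complex matrix, and τ, ν ∈ (0,1) with ν ≤ min{τ,1-τ} or ν ≥ max{τ,1-τ}. Then ‖A^ν X B^{1-ν} + A^{1-ν} X B^ν‖₂² + (ν(1-ν)/(τ(1-τ)))·[‖AX + XB‖₂² - ‖A^τ X B^{1-τ} + A^{1-τ} X B^τ‖₂²] ≤ ‖AX + XB‖₂². -/

import Mathlib

open Matrix ComplexOrder

/-- Real power of a matrix, defined via the spectral decomposition when the
matrix is Hermitian (and junk value `0` otherwise). -/
noncomputable def mpow {n : ℕ} (A : Matrix (Fin n) (Fin n) ℂ) (t : ℝ) :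
    Matrix (Fin n) (Fin n) ℂ :=
  if hA : A.IsHermitian then
    (hA.eigenvectorUnitary : Matrix (Fin n) (Fin n) ℂ) *
      Matrix.diagonal (fun i => ((hA.eigenvalues i ^ t : ℝ) : ℂ)) *
      (star hA.eigenvectorUnitary : Matrix (Fin n) (Fin n) ℂ)
  else 0

/-- The square of the Hilbert–Schmidt (Frobenius) norm, `‖Y‖₂² = tr (Y Yᴴ)`. -/
noncomputable def hsNormSq {n : ℕ} (Y : Matrix (Fin n) (Fin n) ℂ) : ℝ :=
  (Matrix.trace (Y * Yᴴ)).re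

section scalarside
open Real Nat

lemma pow_ineq (x y : ℝ) (hy : 0 ≤ y) (hxy : y ≤ x) (hx : x ≤ 1) (k : ℕ) :
    (1 - y) * x^k ≤ (x - y) + (1 - x) * y^k := by
  induction k with
  | zero => norm_num
  | succ k ih =>
    have hyk : y ^ k ≤ 1 := pow_le_one₀ hy (hxy.trans hx)
    have hyk0 : 0 ≤ y ^ k := pow_nonneg hy k
    have hx0 : (0:ℝ) ≤ x := hy.trans hxy
    have h2 : x * ((1 - y) * x^k) ≤ x * ((x - y) + (1 - x) * y^k) :=
      mul_le_mul_of_nonneg_left ih hx0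
    have h3 : (1 - x) * (x - y) * (1 - y^k) ≥ 0 := by
      apply mul_nonneg (mul_nonneg (by linarith) (by linarith)) (by linarith)
    calc (1 - y) * x^(k+1) = x * ((1 - y) * x^k) := by ring
      _ ≤ x * ((x - y) + (1 - x) * y^k) := h2
      _ ≤ (x - y) + (1 - x) * y^(k+1) := by rw [pow_succ]; nlinarith [h3]

lemma core_cosh (u v d : ℝ) (hv2 : v^2 ≤ u^2) (hu2 : u^2 ≤ 1) :
    (1 - v^2) * Real.cosh (u*d) ≤ (u^2 - v^2) * Real.cosh d + (1 - u^2) * Real.cosh (v*d) := by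
  have h1 : HasSum (fun k => (1 - v^2) * ((u*d)^(2*k)/(2*k)!)) ((1 - v^2) * Real.cosh (u*d)) :=
    (Real.hasSum_cosh (u*d)).mul_left _
  have h2 : HasSum (fun k => (u^2 - v^2) * (d^(2*k)/(2*k)!) + (1 - u^2) * ((v*d)^(2*k)/(2*k)!))
      ((u^2 - v^2) * Real.cosh d + (1 - u^2) * Real.cosh (v*d)) :=
    ((Real.hasSum_cosh d).mul_left _).add ((Real.hasSum_cosh (v*d)).mul_left _)
  refine hasSum_le (fun k => ?_) h1 h2
  have hc : (0:ℝ) ≤ d^(2*k)/(2*k)! := div_nonneg ((even_two_mul k).pow_nonneg d) (Nat.cast_nonneg _)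
  have key := pow_ineq (u^2) (v^2) (sq_nonneg v) hv2 hu2 k
  have hmul := mul_le_mul_of_nonneg_right key hc
  have e1 : (u*d)^(2*k) = (u^2)^k * d^(2*k) := by rw [mul_pow, pow_mul]
  have e2 : (v*d)^(2*k) = (v^2)^k * d^(2*k) := by rw [mul_pow, pow_mul]
  rw [e1, e2]
  ring_nf
  ring_nf at hmul
  linarith

lemma exp_sq_cosh (p q : ℝ) :
    (Real.exp p + Real.exp q)^2 = 2 * Real.exp (p+q) * (Real.cosh (p - q) + 1) := by
  rw [Real.cosh_eq]
  have e1 : Real.exp (p+q) * Real.exp (p-q) = Real.exp p * Real.exp p := by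
    rw [← Real.exp_add, ← Real.exp_add]; ring_nf
  have e2 : Real.exp (p+q) * Real.exp (-(p-q)) = Real.exp q * Real.exp q := by
    rw [← Real.exp_add, ← Real.exp_add]; ring_nf
  have e3 : Real.exp (p+q) = Real.exp p * Real.exp q := by rw [← Real.exp_add]
  nlinarith [e1, e2, e3]

lemma scalar_key (a b : ℝ) (ha : 0 ≤ a) (hb : 0 ≤ b) (τ ν : ℝ)
    (hτ : τ ∈ Set.Ioo (0:ℝ) 1) (hν : ν ∈ Set.Ioo (0:ℝ) 1)
    (h : ν ≤ min τ (1 - τ) ∨ max τ (1 - τ) ≤ ν) :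
    (a^ν * b^(1-ν) + a^(1-ν) * b^ν)^2
      + (ν * (1 - ν) / (τ * (1 - τ))) * ((a+b)^2 - (a^τ * b^(1-τ) + a^(1-τ) * b^τ)^2)
      ≤ (a+b)^2 := by
  obtain ⟨hτ0, hτ1⟩ := hτ
  obtain ⟨hν0, hν1⟩ := hν
  have hτd : (0:ℝ) < τ * (1 - τ) := by nlinarith
  have hνd : (0:ℝ) < ν * (1 - ν) := by nlinarith
  have hle : ν * (1 - ν) ≤ τ * (1 - τ) := by
    rcases h with h | h
    · obtain ⟨h1, h2⟩ := le_min_iff.mp h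
      nlinarith [mul_nonneg (sub_nonneg.mpr h1) (by linarith : (0:ℝ) ≤ 1 - τ - ν)]
    · obtain ⟨h1, h2⟩ := max_le_iff.mp h
      nlinarith [mul_nonneg (sub_nonneg.mpr h1) (by linarith : (0:ℝ) ≤ ν - (1 - τ))]
  set r := ν * (1 - ν) / (τ * (1 - τ)) with hrdef
  have hr0 : 0 ≤ r := le_of_lt (div_pos hνd hτd)
  have hr1 : r ≤ 1 := (div_le_one hτd).mpr hle
  rcases eq_or_lt_of_le ha with ha0 | ha0
  · simp only [← ha0, Real.zero_rpow (ne_of_gt hν0), Real.zero_rpow (ne_of_gt hτ0),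
      Real.zero_rpow (ne_of_gt (by linarith : (0:ℝ) < 1 - ν)), Real.zero_rpow (ne_of_gt (by linarith : (0:ℝ) < 1 - τ)),
      zero_mul, add_zero, zero_add]
    nlinarith [sq_nonneg b]
  rcases eq_or_lt_of_le hb with hb0 | hb0
  · simp only [← hb0, Real.zero_rpow (ne_of_gt hν0), Real.zero_rpow (ne_of_gt hτ0),
      Real.zero_rpow (ne_of_gt (by linarith : (0:ℝ) < 1 - ν)), Real.zero_rpow (ne_of_gt (by linarith : (0:ℝ) < 1 - τ)),
      mul_zero, add_zero, zero_add]
    nlinarith [sq_nonneg a]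
  -- main case: a, b > 0
  set la := Real.log a with hla
  set lb := Real.log b with hlb
  set d := la - lb with hd
  have K : ∀ t : ℝ, (a^t * b^(1-t) + a^(1-t) * b^t)^2
      = 2 * (a*b) * (Real.cosh ((2*t-1) * d) + 1) := by
    intro t
    have e1 : a ^ t = Real.exp (la * t) := Real.rpow_def_of_pos ha0 t
    have e2 : b ^ (1-t) = Real.exp (lb * (1-t)) := Real.rpow_def_of_pos hb0 _
    have e3 : a ^ (1-t) = Real.exp (la * (1-t)) := Real.rpow_def_of_pos ha0 _
    have e4 : b ^ t = Real.exp (lb * t) := Real.rpow_def_of_pos hb0 t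
    rw [e1, e2, e3, e4, ← Real.exp_add, ← Real.exp_add, exp_sq_cosh]
    rw [show la * t + lb * (1-t) + (la * (1-t) + lb * t) = la + lb from by ring,
      show la * t + lb * (1-t) - (la * (1-t) + lb * t) = (2*t-1) * d from by rw [hd]; ring,
      Real.exp_add, Real.exp_log ha0, Real.exp_log hb0]
  have Kab : (a+b)^2 = 2 * (a*b) * (Real.cosh d + 1) := by
    have := K 1
    simp only [Real.rpow_one, sub_self, Real.rpow_zero, mul_one, one_mul] at this
    rw [show ((2:ℝ)-1) * d = d from by norm_num] at this
    exact this
  rw [K ν, K τ, Kab]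
  set u := 2*ν - 1 with hu
  set v := 2*τ - 1 with hv
  have hu2 : u^2 ≤ 1 := by rw [hu]; nlinarith
  have hv2 : v^2 ≤ u^2 := by rw [hu, hv]; nlinarith
  have hVpos : (0:ℝ) < 1 - v^2 := by rw [hv]; nlinarith
  have hr_eq : r = (1 - u^2) / (1 - v^2) := by
    rw [hrdef, hu, hv]
    rw [show 1 - (2*ν-1)^2 = 4 * (ν * (1-ν)) from by ring,
      show 1 - (2*τ-1)^2 = 4 * (τ * (1-τ)) from by ring]
    rw [mul_div_mul_left _ _ (by norm_num : (4:ℝ) ≠ 0)]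
  have core := core_cosh u v d hv2 hu2
  have hstep : Real.cosh (u*d) + r * (Real.cosh d - Real.cosh (v*d)) ≤ Real.cosh d := by
    rw [hr_eq, div_mul_eq_mul_div, ← le_sub_iff_add_le', div_le_iff₀ hVpos]
    nlinarith [core]
  have hab : (0:ℝ) < 2 * (a*b) := by positivity
  nlinarith [mul_le_mul_of_nonneg_left hstep (le_of_lt hab)]

end scalarside

section matrixside
variable {n : ℕ}

lemma mpow_def (A : Matrix (Fin n) (Fin n) ℂ) (hA : A.IsHermitian) (t : ℝ) :
    mpow A t = (hA.eigenvectorUnitary : Matrix (Fin n) (Fin n) ℂ) *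
      Matrix.diagonal (fun i => ((hA.eigenvalues i ^ t : ℝ) : ℂ)) *
      (star hA.eigenvectorUnitary : Matrix (Fin n) (Fin n) ℂ) := dif_pos hA

lemma mpow_zero' (A : Matrix (Fin n) (Fin n) ℂ) (hA : A.IsHermitian) : mpow A 0 = 1 := by
  rw [mpow_def A hA]
  simp only [Real.rpow_zero, Complex.ofReal_one, Matrix.diagonal_one, Matrix.mul_one]
  exact Matrix.mem_unitaryGroup_iff.mp hA.eigenvectorUnitary.2

lemma mpow_one' (A : Matrix (Fin n) (Fin n) ℂ) (hA : A.IsHermitian) : mpow A 1 = A := by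
  rw [mpow_def A hA]
  simp only [Real.rpow_one]
  exact (hA.spectral_theorem).symm

lemma hs_sum (A B X : Matrix (Fin n) (Fin n) ℂ) (hA : A.IsHermitian) (hB : B.IsHermitian)
    (s s' t t' : ℝ) :
    hsNormSq (mpow A s * X * mpow B s' + mpow A t * X * mpow B t')
      = ∑ i, ∑ j,
        (hA.eigenvalues i ^ s * hB.eigenvalues j ^ s'
          + hA.eigenvalues i ^ t * hB.eigenvalues j ^ t')^2
        * Complex.normSq (((star hA.eigenvectorUnitary : Matrix (Fin n) (Fin n) ℂ) * X *
            (hB.eigenvectorUnitary : Matrix (Fin n) (Fin n) ℂ)) i j) := by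
  set U : Matrix (Fin n) (Fin n) ℂ := (hA.eigenvectorUnitary : Matrix (Fin n) (Fin n) ℂ)
  set V : Matrix (Fin n) (Fin n) ℂ := (hB.eigenvectorUnitary : Matrix (Fin n) (Fin n) ℂ)
  set Y : Matrix (Fin n) (Fin n) ℂ := star U * X * V with hY
  have hU1 : star U * U = 1 := hA.eigenvectorUnitary.2.1
  have hV1 : star V * V = 1 := hB.eigenvectorUnitary.2.1
  set Da : ℝ → Matrix (Fin n) (Fin n) ℂ :=
    fun w => Matrix.diagonal (fun i => ((hA.eigenvalues i ^ w : ℝ) : ℂ)) with hDa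
  set Db : ℝ → Matrix (Fin n) (Fin n) ℂ :=
    fun w => Matrix.diagonal (fun j => ((hB.eigenvalues j ^ w : ℝ) : ℂ)) with hDb
  have step1 : ∀ w w' : ℝ, mpow A w * X * mpow B w' = U * (Da w * Y * Db w') * star V := by
    intro w w'
    rw [mpow_def A hA, mpow_def B hB, hY]
    simp only [Matrix.mul_assoc]
    rfl
  set M : Matrix (Fin n) (Fin n) ℂ := Da s * Y * Db s' + Da t * Y * Db t' with hM
  have step2 : mpow A s * X * mpow B s' + mpow A t * X * mpow B t' = U * M * star V := by
    rw [step1 s s', step1 t t', hM, Matrix.mul_add, Matrix.add_mul]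
  rw [step2]
  have step3 : hsNormSq (U * M * star V) = hsNormSq M := by
    unfold hsNormSq
    rw [Matrix.conjTranspose_mul, Matrix.conjTranspose_mul, ← Matrix.star_eq_conjTranspose (star V),
      star_star]
    have : U * M * star V * (V * (Mᴴ * Uᴴ)) = U * (M * Mᴴ) * Uᴴ := by
      calc U * M * star V * (V * (Mᴴ * Uᴴ)) = U * (M * ((star V * V) * (Mᴴ * Uᴴ))) := by
            simp only [Matrix.mul_assoc]
        _ = U * (M * Mᴴ) * Uᴴ := by rw [hV1]; simp only [Matrix.one_mul, Matrix.mul_assoc]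
    rw [this, Matrix.trace_mul_cycle, ← Matrix.mul_assoc, ← Matrix.star_eq_conjTranspose U, hU1,
      Matrix.one_mul]
  rw [step3]
  have entry : ∀ i j, M i j =
      ((hA.eigenvalues i ^ s * hB.eigenvalues j ^ s'
        + hA.eigenvalues i ^ t * hB.eigenvalues j ^ t' : ℝ) : ℂ) * Y i j := by
    intro i j
    rw [hM]
    simp only [Matrix.add_apply, Matrix.mul_diagonal, Matrix.diagonal_mul, hDa, hDb]
    push_cast
    ring
  unfold hsNormSq
  rw [Matrix.trace]
  simp only [Matrix.diag_apply, Matrix.mul_apply, Matrix.conjTranspose_apply,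
    RCLike.star_def, Complex.mul_conj, Complex.re_sum, Complex.ofReal_re]
  refine Finset.sum_congr rfl fun i _ => Finset.sum_congr rfl fun j _ => ?_
  rw [entry i j, Complex.normSq_mul, Complex.normSq_ofReal, sq]

end matrixside

theorem matrix_quadratic_heinz {n : ℕ} (A B X : Matrix (Fin n) (Fin n) ℂ)
    (hA : A.PosSemidef) (hB : B.PosSemidef) (τ ν : ℝ)
    (hτ : τ ∈ Set.Ioo (0:ℝ) 1) (hν : ν ∈ Set.Ioo (0:ℝ) 1)
    (h : ν ≤ min τ (1 - τ) ∨ max τ (1 - τ) ≤ ν) :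
    hsNormSq (mpow A ν * X * mpow B (1 - ν) + mpow A (1 - ν) * X * mpow B ν)
      + (ν * (1 - ν) / (τ * (1 - τ))) *
        (hsNormSq (A * X + X * B)
          - hsNormSq (mpow A τ * X * mpow B (1 - τ) + mpow A (1 - τ) * X * mpow B τ))
      ≤ hsNormSq (A * X + X * B) := by
  have hAX : A * X + X * B = mpow A 1 * X * mpow B 0 + mpow A 0 * X * mpow B 1 := by
    rw [mpow_one' A hA.1, mpow_zero' A hA.1, mpow_one' B hB.1, mpow_zero' B hB.1,
      Matrix.mul_one, Matrix.one_mul]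
  rw [hAX, hs_sum A B X hA.1 hB.1 ν (1-ν) (1-ν) ν, hs_sum A B X hA.1 hB.1 τ (1-τ) (1-τ) τ,
    hs_sum A B X hA.1 hB.1 1 0 0 1]
  simp only [Real.rpow_one, Real.rpow_zero, mul_one, one_mul]
  simp only [Finset.mul_sum, ← Finset.sum_sub_distrib, ← Finset.sum_add_distrib]
  refine Finset.sum_le_sum fun i _ => Finset.sum_le_sum fun j _ => ?_
  have hw : (0:ℝ) ≤ Complex.normSq
      (((star hA.1.eigenvectorUnitary : Matrix (Fin n) (Fin n) ℂ) * X *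
        (hB.1.eigenvectorUnitary : Matrix (Fin n) (Fin n) ℂ)) i j) := Complex.normSq_nonneg _
  have hs := scalar_key (hA.1.eigenvalues i) (hB.1.eigenvalues j)
    (hA.eigenvalues_nonneg i) (hB.eigenvalues_nonneg j) τ ν hτ hν h
  nlinarith [mul_le_mul_of_nonneg_right hs hw]
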